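/- Let (Ψ_k) be harmonic maps R² → S² given stereographically by Ψ_k = Φ∘f_k with f_k(z) = (z + z_k - a_k)/(z + z_k + a_k), z_k ∈ C, a_k > 0, and suppose R_k → 0, |z_k|/R_k → s ∈ [0,∞), a_k/R_k → a ∈ (0,∞). Then for every ρ > 0, lim_{L→∞} lim_{k→∞} ∫_{D_ρ \ D_{R_k L}} (1/2)|∇Ψ_k|² dz = 0. -/

import Mathlib

open MeasureTheory Filter Topology

noncomputable def pd1 (f : ℂ → ℝ) (z : ℂ) : ℝ := fderiv ℝ f z 1

noncomputable def pd2 (f : ℂ → ℝ) (z : ℂ) : ℝ := fderiv ℝ f z Complex.I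

/-- The Möbius map `f(z) = (z + z₀ - a)/(z + z₀ + a)`. -/
noncomputable def fmob (z0 : ℂ) (a : ℝ) (z : ℂ) : ℂ :=
  (z + z0 - (a : ℂ)) / (z + z0 + (a : ℂ))

/-- Components of `Ψ = Φ ∘ f` with `Φ` the inverse stereographic projection. -/
noncomputable def Psi1 (z0 : ℂ) (a : ℝ) (z : ℂ) : ℝ :=
  2 * (fmob z0 a z).re / (Complex.normSq (fmob z0 a z) + 1)

noncomputable def Psi2 (z0 : ℂ) (a : ℝ) (z : ℂ) : ℝ :=
  2 * (fmob z0 a z).im / (Complex.normSq (fmob z0 a z) + 1)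

noncomputable def Psi3 (z0 : ℂ) (a : ℝ) (z : ℂ) : ℝ :=
  (Complex.normSq (fmob z0 a z) - 1) / (Complex.normSq (fmob z0 a z) + 1)

/-- `|∇Ψ|²` for the harmonic bubble `Ψ = Φ ∘ f`. -/
noncomputable def PsiGradSq (z0 : ℂ) (a : ℝ) (z : ℂ) : ℝ :=
  (pd1 (Psi1 z0 a) z) ^ 2 + (pd2 (Psi1 z0 a) z) ^ 2 +
    (pd1 (Psi2 z0 a) z) ^ 2 + (pd2 (Psi2 z0 a) z) ^ 2 +
    (pd1 (Psi3 z0 a) z) ^ 2 + (pd2 (Psi3 z0 a) z) ^ 2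

set_option maxHeartbeats 1000000 in
lemma psiGradSq_eq (z0 : ℂ) (a : ℝ) (z : ℂ) (ha : 0 < a) (h : z + z0 + (a:ℂ) ≠ 0) :
    PsiGradSq z0 a z = 8 * a^2 / ((Complex.normSq (z + z0) + a^2)^2) := by
  have hd : HasDerivAt (fmob z0 a) (2*(a:ℂ)/((z + z0 + (a:ℂ))^2)) z := by
    have h1 : HasDerivAt (fun z : ℂ => z + z0 - (a:ℂ)) 1 z :=
      ((hasDerivAt_id z).add_const z0).sub_const _
    have h2 : HasDerivAt (fun z : ℂ => z + z0 + (a:ℂ)) 1 z :=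
      ((hasDerivAt_id z).add_const z0).add_const _
    have hdv := h1.div h2 h
    simp only [mul_one, one_mul] at hdv
    refine HasDerivAt.congr_deriv hdv ?_
    ring
  generalize hdd : 2*(a:ℂ)/((z + z0 + (a:ℂ))^2) = d at hd
  set D : ℂ →L[ℝ] ℂ := ((1 : ℂ →L[ℂ] ℂ).smulRight d).restrictScalars ℝ with hDdef
  have hFD : HasFDerivAt (fmob z0 a) D z := hd.hasFDerivAt.restrictScalars ℝ
  have hD1 : D 1 = d := by simp [hDdef]
  have hDI : D Complex.I = Complex.I * d := by simp [hDdef]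
  have hu : HasFDerivAt (fun z => (fmob z0 a z).re) (Complex.reCLM.comp D) z :=
    (Complex.reCLM.hasFDerivAt.comp z hFD)
  have hv : HasFDerivAt (fun z => (fmob z0 a z).im) (Complex.imCLM.comp D) z :=
    (Complex.imCLM.hasFDerivAt.comp z hFD)
  have hnsq := Complex.normSq_nonneg (fmob z0 a z)
  have hN : Complex.normSq (fmob z0 a z) + 1 ≠ 0 := by linarith
  set p := (fmob z0 a z).re with hp
  set q := (fmob z0 a z).im with hqv
  set Q : ℂ →L[ℝ] ℝ :=
    ((p • (Complex.reCLM.comp D) + p • (Complex.reCLM.comp D))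
      + (q • (Complex.imCLM.comp D) + q • (Complex.imCLM.comp D))) with hQdef
  have hq : HasFDerivAt (fun z => Complex.normSq (fmob z0 a z) + 1) Q z := by
    rw [show (fun z => Complex.normSq (fmob z0 a z) + 1)
      = fun z => ((fmob z0 a z).re*(fmob z0 a z).re + (fmob z0 a z).im*(fmob z0 a z).im) + 1
      from by funext y; rw [Complex.normSq_apply]]
    exact ((hu.mul hu).add (hv.mul hv)).add_const 1
  have hQ1 : Q 1 = 2*(p*d.re + q*d.im) := by
    simp only [hQdef, ContinuousLinearMap.add_apply, ContinuousLinearMap.coe_smul',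
      Pi.smul_apply, ContinuousLinearMap.comp_apply, hD1, Complex.reCLM_apply,
      Complex.imCLM_apply, smul_eq_mul]
    ring
  have hQI : Q Complex.I = 2*(-(p*d.im) + q*d.re) := by
    simp only [hQdef, ContinuousLinearMap.add_apply, ContinuousLinearMap.coe_smul',
      Pi.smul_apply, ContinuousLinearMap.comp_apply, hDI, Complex.reCLM_apply,
      Complex.imCLM_apply, smul_eq_mul, Complex.mul_re, Complex.mul_im,
      Complex.I_re, Complex.I_im]
    ring
  set Dinv : ℝ →L[ℝ] ℝ := ContinuousLinearMap.smulRight (1 : ℝ →L[ℝ] ℝ)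
    (-((Complex.normSq (fmob z0 a z) + 1) ^ 2)⁻¹) with hDinvdef
  have hqinv : HasFDerivAt (fun z => (Complex.normSq (fmob z0 a z) + 1)⁻¹) (Dinv.comp Q) z :=
    (hasFDerivAt_inv hN).comp z hq
  set N : ℝ := Complex.normSq (fmob z0 a z) + 1 with hNdef
  have hDinv1 : ∀ t : ℝ, Dinv t = -(N^2)⁻¹ * t := by
    intro t
    simp only [hDinvdef, ContinuousLinearMap.smulRight_apply, ContinuousLinearMap.one_apply,
      smul_eq_mul, ← hNdef]
    ring
  -- Psi1
  have hP1 : HasFDerivAt (Psi1 z0 a) ((2 * p) • (Dinv.comp Q) + N⁻¹ • ((2:ℝ) • (Complex.reCLM.comp D))) z := by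
    rw [show Psi1 z0 a = fun y => (2 * (fmob z0 a y).re) * (Complex.normSq (fmob z0 a y) + 1)⁻¹
      from by funext y; rw [Psi1, div_eq_mul_inv]]
    exact (hu.const_mul 2).mul hqinv
  have hP2 : HasFDerivAt (Psi2 z0 a) ((2 * q) • (Dinv.comp Q) + N⁻¹ • ((2:ℝ) • (Complex.imCLM.comp D))) z := by
    rw [show Psi2 z0 a = fun y => (2 * (fmob z0 a y).im) * (Complex.normSq (fmob z0 a y) + 1)⁻¹
      from by funext y; rw [Psi2, div_eq_mul_inv]]
    exact (hv.const_mul 2).mul hqinv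
  have hq' : HasFDerivAt (fun z => Complex.normSq (fmob z0 a z) - 1) Q z := by
    have h2 := hq.sub_const 2
    exact h2.congr_of_eventuallyEq (by filter_upwards with y; ring)
  have hP3 : HasFDerivAt (Psi3 z0 a) ((N - 2) • (Dinv.comp Q) + N⁻¹ • Q) z := by
    rw [show Psi3 z0 a = fun y => (Complex.normSq (fmob z0 a y) - 1) * (Complex.normSq (fmob z0 a y) + 1)⁻¹
      from by funext y; rw [Psi3, div_eq_mul_inv]]
    have := hq'.mul hqinv
    refine this.congr_fderiv ?_
    rw [hNdef]; congr 2; ring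
  have e11 : pd1 (Psi1 z0 a) z = (2*p) * (-(N^2)⁻¹ * (2*(p*d.re + q*d.im))) + N⁻¹ * (2 * d.re) := by
    rw [pd1, hP1.fderiv]
    simp only [ContinuousLinearMap.add_apply, ContinuousLinearMap.coe_smul', Pi.smul_apply,
      ContinuousLinearMap.comp_apply, hQ1, hDinv1, hD1, Complex.reCLM_apply, smul_eq_mul]
  have e12 : pd2 (Psi1 z0 a) z = (2*p) * (-(N^2)⁻¹ * (2*(-(p*d.im) + q*d.re))) + N⁻¹ * (2 * (-d.im)) := by
    rw [pd2, hP1.fderiv]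
    simp only [ContinuousLinearMap.add_apply, ContinuousLinearMap.coe_smul', Pi.smul_apply,
      ContinuousLinearMap.comp_apply, hQI, hDinv1, hDI, Complex.reCLM_apply, smul_eq_mul,
      Complex.mul_re, Complex.I_re, Complex.I_im]
    ring
  have e21 : pd1 (Psi2 z0 a) z = (2*q) * (-(N^2)⁻¹ * (2*(p*d.re + q*d.im))) + N⁻¹ * (2 * d.im) := by
    rw [pd1, hP2.fderiv]
    simp only [ContinuousLinearMap.add_apply, ContinuousLinearMap.coe_smul', Pi.smul_apply,
      ContinuousLinearMap.comp_apply, hQ1, hDinv1, hD1, Complex.imCLM_apply, smul_eq_mul]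
  have e22 : pd2 (Psi2 z0 a) z = (2*q) * (-(N^2)⁻¹ * (2*(-(p*d.im) + q*d.re))) + N⁻¹ * (2 * d.re) := by
    rw [pd2, hP2.fderiv]
    simp only [ContinuousLinearMap.add_apply, ContinuousLinearMap.coe_smul', Pi.smul_apply,
      ContinuousLinearMap.comp_apply, hQI, hDinv1, hDI, Complex.imCLM_apply, smul_eq_mul,
      Complex.mul_im, Complex.I_re, Complex.I_im]
    ring
  have e31 : pd1 (Psi3 z0 a) z = (N - 2) * (-(N^2)⁻¹ * (2*(p*d.re + q*d.im))) + N⁻¹ * (2*(p*d.re + q*d.im)) := by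
    rw [pd1, hP3.fderiv]
    simp only [ContinuousLinearMap.add_apply, ContinuousLinearMap.coe_smul', Pi.smul_apply,
      ContinuousLinearMap.comp_apply, hQ1, hDinv1, smul_eq_mul]
  have e32 : pd2 (Psi3 z0 a) z = (N - 2) * (-(N^2)⁻¹ * (2*(-(p*d.im) + q*d.re))) + N⁻¹ * (2*(-(p*d.im) + q*d.re)) := by
    rw [pd2, hP3.fderiv]
    simp only [ContinuousLinearMap.add_apply, ContinuousLinearMap.coe_smul', Pi.smul_apply,
      ContinuousLinearMap.comp_apply, hQI, hDinv1, smul_eq_mul]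
  have hNval : N = p*p + q*q + 1 := by rw [hNdef, Complex.normSq_apply, hp, hqv]
  have hN0 : N ≠ 0 := by rw [hNdef]; exact hN
  have main : PsiGradSq z0 a z = 8 * Complex.normSq d / N^2 := by
    rw [PsiGradSq, e11, e12, e21, e22, e31, e32, Complex.normSq_apply, hNval]
    have hN0' : p*p + q*q + 1 ≠ 0 := by rw [← hNval]; exact hN0
    field_simp
    ring
  rw [main]
  have hwnz : Complex.normSq (z + z0 + (a:ℂ)) ≠ 0 := by
    simpa [Complex.normSq_eq_zero] using h
  have hnd : Complex.normSq d = 4*a^2/(Complex.normSq (z + z0 + (a:ℂ)))^2 := by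
    rw [← hdd, Complex.normSq_div]
    simp only [Complex.normSq_mul, Complex.normSq_ofReal, map_pow]
    rw [show Complex.normSq 2 = 4 from by norm_num [Complex.normSq_apply]]
    ring
  have hsum : Complex.normSq (z + z0 - (a:ℂ)) + Complex.normSq (z + z0 + (a:ℂ))
      = 2*(Complex.normSq (z + z0) + a^2) := by
    simp only [Complex.normSq_apply, Complex.add_re, Complex.add_im, Complex.sub_re,
      Complex.sub_im, Complex.ofReal_re, Complex.ofReal_im]
    ring
  have hf : N = 2*(Complex.normSq (z + z0) + a^2) / Complex.normSq (z + z0 + (a:ℂ)) := by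
    rw [hNdef, fmob, Complex.normSq_div, ← hsum]
    field_simp
  rw [hnd, hf]
  have hpos : (0:ℝ) < Complex.normSq (z + z0) + a^2 := by nlinarith [Complex.normSq_nonneg (z+z0)]
  field_simp
  ring

/-- energy density `4b²/((|ζ+c|²+b²)²)`. -/
noncomputable def dens (c : ℂ) (b : ℝ) (ζ : ℂ) : ℝ :=
  4 * b^2 / ((Complex.normSq (ζ + c) + b^2)^2)

lemma dens_nonneg (c : ℂ) (b : ℝ) (ζ : ℂ) : 0 ≤ dens c b ζ := by
  unfold dens; positivity

lemma dens_den_pos (c : ℂ) {b : ℝ} (hb : 0 < b) (ζ : ℂ) :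
    0 < Complex.normSq (ζ + c) + b^2 :=
  add_pos_of_nonneg_of_pos (Complex.normSq_nonneg _) (by positivity)

lemma dens_continuous (c : ℂ) {b : ℝ} (hb : 0 < b) : Continuous (dens c b) := by
  unfold dens
  refine continuous_const.div ?_ (fun ζ => pow_ne_zero 2 (dens_den_pos c hb ζ).ne')
  exact ((Complex.continuous_normSq.comp (continuous_id.add continuous_const)).add
    continuous_const).pow 2

lemma dens_smul (z0 : ℂ) {b R : ℝ} (hb : 0 < b) (hR : 0 < R) (ζ : ℂ) :
    dens z0 b (R • ζ) = ((R^2)⁻¹) * dens (z0 / (R:ℂ)) (b / R) ζ := by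
  unfold dens
  have h1 : R • ζ + z0 = (R:ℂ) * (ζ + z0/(R:ℂ)) := by
    rw [Complex.real_smul]
    have : (R:ℂ) ≠ 0 := Complex.ofReal_ne_zero.2 hR.ne'
    field_simp
  rw [h1, Complex.normSq_mul, Complex.normSq_ofReal]
  have h2 : 0 < Complex.normSq (ζ + z0/(R:ℂ)) + (b/R)^2 := dens_den_pos _ (by positivity) _
  have h3 : 0 < R^2 * Complex.normSq (ζ + z0/(R:ℂ)) + b^2 :=
    add_pos_of_nonneg_of_pos (mul_nonneg (sq_nonneg R) (Complex.normSq_nonneg _)) (by positivity)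
  rw [inv_mul_eq_div, div_div, div_eq_div_iff (by nlinarith [Complex.normSq_nonneg (ζ + z0/(R:ℂ))] : (0:ℝ) < (R * R * Complex.normSq (ζ + z0 / (R:ℂ)) + b ^ 2) ^ 2).ne' (mul_pos (pow_pos h2 2) (by positivity : (0:ℝ) < R^2)).ne']
  field_simp

lemma scale_eq (z0 : ℂ) {b R : ℝ} (hb : 0 < b) (hR : 0 < R) (r1 r2 : ℝ) :
    ∫ z in Metric.ball (0:ℂ) r1 \ Metric.ball 0 r2, dens z0 b z
      = ∫ ζ in Metric.ball (0:ℂ) (r1/R) \ Metric.ball 0 (r2/R), dens (z0/(R:ℂ)) (b/R) ζ := by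
  have hm1 : MeasurableSet (Metric.ball (0:ℂ) r1 \ Metric.ball 0 r2) :=
    measurableSet_ball.diff measurableSet_ball
  have hm2 : MeasurableSet (Metric.ball (0:ℂ) (r1/R) \ Metric.ball 0 (r2/R)) :=
    measurableSet_ball.diff measurableSet_ball
  rw [← integral_indicator hm1, ← integral_indicator hm2]
  have key := MeasureTheory.Measure.integral_comp_smul (μ := (volume : Measure ℂ))
    (Set.indicator (Metric.ball (0:ℂ) r1 \ Metric.ball 0 r2) (dens z0 b)) R
  rw [Complex.finrank_real_complex] at key
  have habs : |((R^2 : ℝ))⁻¹| = (R^2)⁻¹ := abs_of_pos (by positivity)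
  rw [habs] at key
  have hfun : (fun x : ℂ => Set.indicator (Metric.ball (0:ℂ) r1 \ Metric.ball 0 r2)
        (dens z0 b) (R • x))
      = fun x => (R^2)⁻¹ • Set.indicator (Metric.ball (0:ℂ) (r1/R) \ Metric.ball 0 (r2/R))
        (dens (z0/(R:ℂ)) (b/R)) x := by
    funext x
    have hmem : ∀ r : ℝ, R • x ∈ Metric.ball (0:ℂ) r ↔ x ∈ Metric.ball (0:ℂ) (r/R) := by
      intro r
      rw [mem_ball_zero_iff, mem_ball_zero_iff, norm_smul, Real.norm_eq_abs,
        abs_of_pos hR, lt_div_iff₀ hR, mul_comm]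
    by_cases hx : x ∈ Metric.ball (0:ℂ) (r1/R) \ Metric.ball 0 (r2/R)
    · rw [Set.indicator_of_mem hx, Set.indicator_of_mem
        (by exact ⟨(hmem r1).2 hx.1, fun hc => hx.2 ((hmem r2).1 hc)⟩), dens_smul z0 hb hR]
      simp [smul_eq_mul]
    · rw [Set.indicator_of_notMem hx, Set.indicator_of_notMem, smul_zero]
      intro hc
      exact hx ⟨(hmem r1).1 hc.1, fun hcc => hc.2 ((hmem r2).2 hcc)⟩
  rw [hfun, integral_smul] at key
  have hR2 : ((R^2 : ℝ))⁻¹ ≠ 0 := by positivity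
  rw [smul_eq_mul, smul_eq_mul] at key
  exact (mul_left_cancel₀ hR2 key).symm

lemma rot_eq (c : ℂ) (b : ℝ) (r1 r2 : ℝ) :
    ∫ ζ in Metric.ball (0:ℂ) r1 \ Metric.ball 0 r2, dens c b ζ
      = ∫ ζ in Metric.ball (0:ℂ) r1 \ Metric.ball 0 r2, dens ((‖c‖ : ℝ):ℂ) b ζ := by
  rcases eq_or_ne c 0 with rfl | hc
  · simp
  have hm : MeasurableSet (Metric.ball (0:ℂ) r1 \ Metric.ball 0 r2) :=
    measurableSet_ball.diff measurableSet_ball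
  have habs : (0:ℝ) < ‖c‖ := norm_pos_iff.mpr hc
  set u : ℂ := c / (‖c‖ : ℂ) with hu
  have hun : ‖u‖ = 1 := by
    rw [hu, norm_div, Complex.norm_of_nonneg (norm_nonneg c),
      div_self habs.ne']
  set U : Circle := ⟨u, mem_sphere_zero_iff_norm.2 hun⟩ with hU
  have key := MeasureTheory.integral_comp (rotation U)
    (Set.indicator (Metric.ball (0:ℂ) r1 \ Metric.ball 0 r2) (dens c b))
  rw [← integral_indicator hm, ← integral_indicator hm, ← key]
  congr 1
  funext ζ
  have hrot : (rotation U) ζ = u * ζ := by rw [rotation_apply]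
  have hnorm : ‖u * ζ‖ = ‖ζ‖ := by rw [norm_mul, hun, one_mul]
  by_cases hx : ζ ∈ Metric.ball (0:ℂ) r1 \ Metric.ball 0 r2
  · rw [hrot, Set.indicator_of_mem, Set.indicator_of_mem hx]
    · unfold dens
      have : u * ζ + c = u * (ζ + (‖c‖ : ℂ)) := by
        rw [mul_add, hu, div_mul_cancel₀ _ (Complex.ofReal_ne_zero.2 habs.ne')]
      rw [this, Complex.normSq_mul, show Complex.normSq u = 1 from by
        rw [← Complex.sq_norm, hun]; norm_num, one_mul]
    · constructor
      · rw [mem_ball_zero_iff, hnorm]; exact mem_ball_zero_iff.1 hx.1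
      · intro hcon
        exact hx.2 (by rw [mem_ball_zero_iff, ← hnorm]; exact mem_ball_zero_iff.1 hcon)
  · rw [hrot, Set.indicator_of_notMem hx, Set.indicator_of_notMem]
    intro hcon
    refine hx ⟨?_, ?_⟩
    · rw [mem_ball_zero_iff, ← hnorm]; exact mem_ball_zero_iff.1 hcon.1
    · intro hcc
      exact hcon.2 (by rw [mem_ball_zero_iff, hnorm]; exact mem_ball_zero_iff.1 hcc)

set_option maxHeartbeats 800000 in
lemma dens_le_bound {aa ss : ℝ} (ha : 0 < aa) (hs : 0 ≤ ss) {b t : ℝ}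
    (hb1 : aa/2 ≤ b) (hb2 : b ≤ 2*aa) (ht0 : 0 ≤ t) (ht : t ≤ ss+1) (ζ : ℂ) :
    dens (t:ℂ) b ζ ≤ (16*aa^2*((ss+2)^2*(2+8/aa^2))^2) / (1+‖ζ‖)^4 := by
  set x := ‖ζ + ((t:ℝ):ℂ)‖ with hx
  have hx0 : (0:ℝ) ≤ x := norm_nonneg _
  have hz0 : (0:ℝ) ≤ ‖ζ‖ := norm_nonneg _
  have hnq : Complex.normSq (ζ + (t:ℂ)) = x^2 := by
    rw [hx, ← Complex.sq_norm]
  have hb0 : 0 < b := lt_of_lt_of_le (by positivity) hb1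
  have h1 : ‖ζ‖ ≤ x + t := by
    have : ζ = (ζ + (t:ℂ)) - (t:ℂ) := by ring
    calc ‖ζ‖ = ‖(ζ + (t:ℂ)) - (t:ℂ)‖ := by rw [← this]
    _ ≤ ‖ζ + (t:ℂ)‖ + ‖((t:ℝ):ℂ)‖ := norm_sub_le _ _
    _ = x + t := by rw [Complex.norm_of_nonneg ht0]
  have step1 : 1 + ‖ζ‖ ≤ (ss+2)*(1+x) := by nlinarith
  have step2 : (1+x)^2 ≤ (2+8/aa^2)*(x^2 + b^2) := by
    have hbsq : aa^2/4 ≤ b^2 := by nlinarith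
    have h8 : (0:ℝ) ≤ 8/aa^2 * x^2 := by positivity
    have haa2 : (0:ℝ) < aa^2 := by positivity
    have hdiv : 8/aa^2 * (aa^2/4) = 2 := by field_simp; ring
    nlinarith [sq_nonneg (x-1), mul_le_mul_of_nonneg_left hbsq (le_of_lt (by positivity : (0:ℝ) < 8/aa^2))]
  have key : (1+‖ζ‖)^2 ≤ ((ss+2)^2*(2+8/aa^2)) * (x^2 + b^2) := by
    calc (1+‖ζ‖)^2 ≤ ((ss+2)*(1+x))^2 := by
          apply pow_le_pow_left₀ (by positivity) step1
    _ = (ss+2)^2 * (1+x)^2 := by ring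
    _ ≤ (ss+2)^2 * ((2+8/aa^2)*(x^2 + b^2)) := by
          apply mul_le_mul_of_nonneg_left step2 (by positivity)
    _ = ((ss+2)^2*(2+8/aa^2)) * (x^2 + b^2) := by ring
  have hden : (0:ℝ) < x^2 + b^2 := by positivity
  rw [dens, hnq, div_le_div_iff₀ (by positivity) (by positivity)]
  have key2 : ((1+‖ζ‖)^2)^2 ≤ (((ss+2)^2*(2+8/aa^2)) * (x^2 + b^2))^2 :=
    pow_le_pow_left₀ (by positivity) key 2
  have hbb : b^2 ≤ 4*aa^2 := by nlinarith
  calc 4*b^2 * (1+‖ζ‖)^4 = 4*b^2 * ((1+‖ζ‖)^2)^2 := by ring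
  _ ≤ 4*(4*aa^2) * ((((ss+2)^2*(2+8/aa^2)) * (x^2 + b^2))^2) := by
      apply mul_le_mul (by linarith) key2 (by positivity) (by positivity)
  _ = 16*aa^2*((ss+2)^2*(2+8/aa^2))^2 * (x^2+b^2)^2 := by ring

lemma bound_integrable (C : ℝ) :
    Integrable (fun ζ : ℂ => C / (1+‖ζ‖)^4) (volume : Measure ℂ) := by
  have h : ((Module.finrank ℝ ℂ : ℝ)) < 4 := by
    rw [Complex.finrank_real_complex]; norm_num
  have hI := (integrable_one_add_norm (E := ℂ) (μ := volume) h).const_mul C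
  refine hI.congr (Filter.Eventually.of_forall fun ζ => ?_)
  have h0 : (0:ℝ) < 1 + ‖ζ‖ := by positivity
  show C * (1 + ‖ζ‖) ^ (-(4:ℝ)) = C / (1 + ‖ζ‖) ^ 4
  rw [Real.rpow_neg h0.le, show ((4:ℝ)) = ((4:ℕ):ℝ) from by norm_num,
    Real.rpow_natCast, div_eq_mul_inv]

lemma half_grad_ae (z0 : ℂ) {b : ℝ} (hb : 0 < b) :
    (fun z => (1/2 : ℝ) * PsiGradSq z0 b z) =ᵐ[(volume : Measure ℂ)] dens z0 b := by
  have hae : ∀ᵐ z : ℂ, z ≠ -z0 - (b:ℂ) := by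
    rw [ae_iff]
    simp only [ne_eq, not_not, Set.setOf_eq_eq_singleton]
    exact measure_singleton _
  filter_upwards [hae] with z hz
  have h : z + z0 + (b:ℂ) ≠ 0 := by
    intro h0
    exact hz (by linear_combination h0)
  rw [psiGradSq_eq z0 b z hb h, dens]
  ring

/-- no neck energy for the harmonic bubbles
`Ψ_k = Φ ∘ ((z + z_k - a_k)/(z + z_k + a_k))`: if `R_k → 0`, `|z_k|/R_k → s ∈ [0,∞)`
and `a_k/R_k → a ∈ (0,∞)`, then for every `ρ > 0`,
`lim_{L→∞} lim_{k→∞} ∫_{D_ρ \ D_{R_k L}} (1/2)|∇Ψ_k|² = 0`. -/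
theorem stmt_19 (zs : ℕ → ℂ) (as Rs : ℕ → ℝ) (s a : ℝ)
    (has : ∀ k, 0 < as k) (hRs : ∀ k, 0 < Rs k)
    (hR0 : Tendsto Rs atTop (nhds 0))
    (hzs : Tendsto (fun k => ‖zs k‖ / Rs k) atTop (nhds s))
    (haa : Tendsto (fun k => as k / Rs k) atTop (nhds a))
    (hs : 0 ≤ s) (ha : 0 < a) (ρ : ℝ) (hρ : 0 < ρ) :
    ∃ g : ℝ → ℝ,
      (∀ L : ℝ, 0 < L →
        Tendsto (fun k =>
            ∫ z in Metric.ball (0 : ℂ) ρ \ Metric.ball (0 : ℂ) (Rs k * L),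
              (1 / 2) * PsiGradSq (zs k) (as k) z)
          atTop (nhds (g L))) ∧
      Tendsto g atTop (nhds 0) := by
  set tk : ℕ → ℝ := fun k => ‖zs k‖ / Rs k with htk
  set bk : ℕ → ℝ := fun k => as k / Rs k with hbk
  have hbk0 : ∀ k, 0 < bk k := fun k => div_pos (has k) (hRs k)
  have htk0 : ∀ k, 0 ≤ tk k := fun k => div_nonneg (norm_nonneg _) (hRs k).le
  set C : ℝ := 16*a^2*((s+2)^2*(2+8/a^2))^2 with hC
  refine ⟨fun L => ∫ ζ in (Metric.ball (0:ℂ) L)ᶜ, dens ((s:ℝ):ℂ) a ζ, ?_, ?_⟩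
  · -- part 1
    intro L hL
    have hmL : MeasurableSet ((Metric.ball (0:ℂ) L)ᶜ) := measurableSet_ball.compl
    -- the div tendsto
    have hdiv : Tendsto (fun k => ρ / Rs k) atTop atTop := by
      have hinv : Tendsto (fun k => (Rs k)⁻¹) atTop atTop :=
        tendsto_inv_nhdsGT_zero.comp (tendsto_nhdsWithin_iff.mpr
          ⟨hR0, Eventually.of_forall fun k => hRs k⟩)
      have := hinv.const_mul_atTop hρ
      simpa [div_eq_mul_inv] using this
    -- identification of the integrals
    have hchain : ∀ k,
        (∫ z in Metric.ball (0 : ℂ) ρ \ Metric.ball (0 : ℂ) (Rs k * L),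
          (1 / 2) * PsiGradSq (zs k) (as k) z)
        = ∫ ζ in Metric.ball (0:ℂ) (ρ / Rs k) \ Metric.ball 0 L,
            dens ((tk k : ℝ):ℂ) (bk k) ζ := by
      intro k
      have e1 : (∫ z in Metric.ball (0 : ℂ) ρ \ Metric.ball (0 : ℂ) (Rs k * L),
          (1 / 2) * PsiGradSq (zs k) (as k) z)
          = ∫ z in Metric.ball (0 : ℂ) ρ \ Metric.ball (0 : ℂ) (Rs k * L),
            dens (zs k) (as k) z := by
        apply integral_congr_ae
        exact (half_grad_ae (zs k) (has k)).filter_mono (ae_mono Measure.restrict_le_self)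
      rw [e1, scale_eq (zs k) (has k) (hRs k) ρ (Rs k * L), rot_eq]
      have h1 : Rs k * L / Rs k = L := mul_div_cancel_left₀ L (hRs k).ne'
      have h2 : ‖(zs k) / ((Rs k : ℝ):ℂ)‖ = tk k := by
        rw [norm_div, Complex.norm_of_nonneg (hRs k).le]
      rw [h1, h2]
    -- DCT
    have hDCT : Tendsto (fun k => ∫ ζ in Metric.ball (0:ℂ) (ρ / Rs k) \ Metric.ball 0 L,
        dens ((tk k : ℝ):ℂ) (bk k) ζ) atTop
        (nhds (∫ ζ in (Metric.ball (0:ℂ) L)ᶜ, dens ((s:ℝ):ℂ) a ζ)) := by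
      have hm : ∀ k, MeasurableSet (Metric.ball (0:ℂ) (ρ / Rs k) \ Metric.ball 0 L) :=
        fun k => measurableSet_ball.diff measurableSet_ball
      have heq : ∀ k, (∫ ζ in Metric.ball (0:ℂ) (ρ / Rs k) \ Metric.ball 0 L,
          dens ((tk k : ℝ):ℂ) (bk k) ζ)
          = ∫ ζ, Set.indicator (Metric.ball (0:ℂ) (ρ / Rs k) \ Metric.ball 0 L)
              (dens ((tk k : ℝ):ℂ) (bk k)) ζ := fun k => (integral_indicator (hm k)).symm
      have heq2 : (∫ ζ in (Metric.ball (0:ℂ) L)ᶜ, dens ((s:ℝ):ℂ) a ζ)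
          = ∫ ζ, Set.indicator ((Metric.ball (0:ℂ) L)ᶜ) (dens ((s:ℝ):ℂ) a) ζ :=
        (integral_indicator hmL).symm
      rw [heq2]
      simp only [heq]
      apply tendsto_integral_filter_of_dominated_convergence (fun ζ => C / (1+‖ζ‖)^4)
      · exact Eventually.of_forall fun k =>
          ((dens_continuous _ (hbk0 k)).aestronglyMeasurable).indicator (hm k)
      · have hbEv : ∀ᶠ k in atTop, bk k ∈ Set.Ioo (a/2) (2*a) :=
          haa (Ioo_mem_nhds (by linarith) (by linarith))
        have htEv : ∀ᶠ k in atTop, tk k < s + 1 := hzs (Iio_mem_nhds (by linarith))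
        filter_upwards [hbEv, htEv] with k hb ht
        refine Eventually.of_forall fun ζ => ?_
        rw [Real.norm_of_nonneg (Set.indicator_nonneg (fun x _ => dens_nonneg _ _ x) ζ)]
        calc Set.indicator _ (dens ((tk k : ℝ):ℂ) (bk k)) ζ ≤ dens ((tk k : ℝ):ℂ) (bk k) ζ :=
              Set.indicator_le_self' (fun x _ => dens_nonneg _ _ x) ζ
        _ ≤ C / (1+‖ζ‖)^4 := dens_le_bound ha hs hb.1.le hb.2.le (htk0 k) ht.le ζ
      · exact bound_integrable C
      · refine Eventually.of_forall fun ζ => ?_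
        by_cases hζ : ζ ∈ Metric.ball (0:ℂ) L
        · have h0 : ∀ k, Set.indicator (Metric.ball (0:ℂ) (ρ / Rs k) \ Metric.ball 0 L)
              (dens ((tk k : ℝ):ℂ) (bk k)) ζ = 0 := fun k =>
            Set.indicator_of_notMem (by intro hc; exact hc.2 hζ) _
          have h1 : Set.indicator ((Metric.ball (0:ℂ) L)ᶜ) (dens ((s:ℝ):ℂ) a) ζ = 0 :=
            Set.indicator_of_notMem (by intro hc; exact hc hζ) _
          simp only [h0, h1]
          exact tendsto_const_nhds
        · have hmem : ∀ᶠ k in atTop, ζ ∈ Metric.ball (0:ℂ) (ρ / Rs k) := by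
            filter_upwards [hdiv.eventually_gt_atTop ‖ζ‖] with k hk
            exact mem_ball_zero_iff.2 hk
          have hval : Tendsto (fun k => dens ((tk k : ℝ):ℂ) (bk k) ζ) atTop
              (nhds (dens ((s:ℝ):ℂ) a ζ)) := by
            unfold dens
            have hnum : Tendsto (fun k => 4 * (bk k)^2) atTop (nhds (4 * a^2)) :=
              tendsto_const_nhds.mul (haa.pow 2)
            have hden : Tendsto (fun k => (Complex.normSq (ζ + ((tk k : ℝ):ℂ)) + (bk k)^2)^2)
                atTop (nhds ((Complex.normSq (ζ + ((s:ℝ):ℂ)) + a^2)^2)) := by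
              apply Tendsto.pow
              exact (Complex.continuous_normSq.tendsto _).comp
                (tendsto_const_nhds.add ((Complex.continuous_ofReal.tendsto _).comp hzs))
                |>.add (haa.pow 2)
            exact hnum.div hden (pow_ne_zero 2 (dens_den_pos _ ha ζ).ne')
          have heq3 : ∀ᶠ k in atTop,
              Set.indicator (Metric.ball (0:ℂ) (ρ / Rs k) \ Metric.ball 0 L)
                (dens ((tk k : ℝ):ℂ) (bk k)) ζ = dens ((tk k : ℝ):ℂ) (bk k) ζ := by
            filter_upwards [hmem] with k hk
            exact Set.indicator_of_mem (by exact ⟨hk, hζ⟩) _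
          rw [Set.indicator_of_mem (Set.mem_compl hζ)]
          exact hval.congr' (by filter_upwards [heq3] with k hk using hk.symm)
    exact hDCT.congr (fun k => (hchain k).symm)
  · -- part 2
    have hmL : ∀ L : ℝ, MeasurableSet ((Metric.ball (0:ℂ) L)ᶜ) :=
      fun L => measurableSet_ball.compl
    have heq : ∀ L : ℝ, (∫ ζ in (Metric.ball (0:ℂ) L)ᶜ, dens ((s:ℝ):ℂ) a ζ)
        = ∫ ζ, Set.indicator ((Metric.ball (0:ℂ) L)ᶜ) (dens ((s:ℝ):ℂ) a) ζ :=
      fun L => (integral_indicator (hmL L)).symm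
    simp only [heq]
    have : Tendsto (fun L : ℝ => ∫ ζ, Set.indicator ((Metric.ball (0:ℂ) L)ᶜ)
        (dens ((s:ℝ):ℂ) a) ζ) atTop (nhds (∫ _ : ℂ, (0:ℝ))) := by
      apply tendsto_integral_filter_of_dominated_convergence (fun ζ => C / (1+‖ζ‖)^4)
      · exact Eventually.of_forall fun L =>
          ((dens_continuous _ ha).aestronglyMeasurable).indicator (hmL L)
      · refine Eventually.of_forall fun L => Eventually.of_forall fun ζ => ?_
        rw [Real.norm_of_nonneg (Set.indicator_nonneg (fun x _ => dens_nonneg _ _ x) ζ)]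
        calc Set.indicator _ (dens ((s:ℝ):ℂ) a) ζ ≤ dens ((s:ℝ):ℂ) a ζ :=
              Set.indicator_le_self' (fun x _ => dens_nonneg _ _ x) ζ
        _ ≤ C / (1+‖ζ‖)^4 := dens_le_bound ha hs (by linarith) (by linarith) hs (by linarith) ζ
      · exact bound_integrable C
      · refine Eventually.of_forall fun ζ => ?_
        have hev : ∀ᶠ L in (atTop : Filter ℝ),
            Set.indicator ((Metric.ball (0:ℂ) L)ᶜ) (dens ((s:ℝ):ℂ) a) ζ = 0 := by
          filter_upwards [eventually_gt_atTop ‖ζ‖] with L hLz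
          exact Set.indicator_of_notMem (by intro hc; exact hc (mem_ball_zero_iff.2 hLz)) _
        exact tendsto_const_nhds.congr' (by filter_upwards [hev] with L hLz using hLz.symm)
    simpa using this
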